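/- Let β : ℝ → ℝ be a nondecreasing, left-continuous function and let μ_β be the associated Lebesgue-Stieltjes measure on ℝ, determined by μ_β([a,b)) = β(b) − β(a) for a ≤ b. Then for x₀ ∈ ℝ and A ∈ ℝ, β is differentiable at x₀ with β'(x₀) = A if and only if the strong derivative of μ_β at x₀ exists and equals A. -/

import Mathlib

open MeasureTheory Filter Topology Set

noncomputable section

/-- A measure on ℝ has strong derivative `A` at `x₀` if for every open interval
`I = (a,b)`, `μ(x₀ + rI)/m(rI) → A` as `r → 0+`. -/
def HasStrongDerivR (μ : Measure ℝ) (A x₀ : ℝ) : Prop :=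
  ∀ a b : ℝ, a < b →
    Tendsto (fun r : ℝ =>
        (μ ((fun y => x₀ + r * y) '' (Set.Ioo a b))).toReal /
          (volume ((fun y => r * y) '' (Set.Ioo a b))).toReal)
      (𝓝[>] 0) (𝓝 A)

namespace StieltjesStrongDeriv

variable {β : ℝ → ℝ} {μβ : Measure ℝ}

lemma mu_Ioo_le (hμβ : ∀ a b : ℝ, a ≤ b → μβ (Set.Ico a b) = ENNReal.ofReal (β b - β a))
    {c d : ℝ} (h : c ≤ d) : μβ (Set.Ioo c d) ≤ ENNReal.ofReal (β d - β c) := by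
  rw [← hμβ c d h]
  exact measure_mono Set.Ioo_subset_Ico_self

lemma mu_Ioo_ne_top (hμβ : ∀ a b : ℝ, a ≤ b → μβ (Set.Ico a b) = ENNReal.ofReal (β b - β a))
    {c d : ℝ} (h : c ≤ d) : μβ (Set.Ioo c d) ≠ ⊤ :=
  ((mu_Ioo_le hμβ h).trans_lt ENNReal.ofReal_lt_top).ne

lemma toReal_mu_Ioo_le (hmono : Monotone β)
    (hμβ : ∀ a b : ℝ, a ≤ b → μβ (Set.Ico a b) = ENNReal.ofReal (β b - β a))
    {c d : ℝ} (h : c ≤ d) : (μβ (Set.Ioo c d)).toReal ≤ β d - β c := by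
  have h1 : (μβ (Set.Ioo c d)).toReal ≤ (ENNReal.ofReal (β d - β c)).toReal :=
    ENNReal.toReal_mono ENNReal.ofReal_ne_top (mu_Ioo_le hμβ h)
  rwa [ENNReal.toReal_ofReal (sub_nonneg.2 (hmono h))] at h1

lemma le_toReal_mu_Ioo (hμβ : ∀ a b : ℝ, a ≤ b → μβ (Set.Ico a b) = ENNReal.ofReal (β b - β a))
    {c c' d : ℝ} (h : c < c') (h2 : c' ≤ d) : β d - β c' ≤ (μβ (Set.Ioo c d)).toReal := by
  have h1 : ENNReal.ofReal (β d - β c') ≤ μβ (Set.Ioo c d) := by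
    rw [← hμβ c' d h2]
    exact measure_mono (Set.Ico_subset_Ioo_left h)
  have h3 := ENNReal.toReal_mono (mu_Ioo_ne_top hμβ (h.le.trans h2)) h1
  rw [ENNReal.toReal_ofReal'] at h3
  exact (le_max_left _ _).trans h3

lemma ratio_eq (μβ : Measure ℝ) (x₀ a b : ℝ) (hab : a < b) {r : ℝ} (hr : 0 < r) :
    (μβ ((fun y => x₀ + r * y) '' (Set.Ioo a b))).toReal /
        (volume ((fun y => r * y) '' (Set.Ioo a b))).toReal
      = (μβ (Set.Ioo (x₀ + r * a) (x₀ + r * b))).toReal / (r * (b - a)) := by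
  have h1 : (fun y => x₀ + r * y) '' Set.Ioo a b = Set.Ioo (x₀ + r * a) (x₀ + r * b) := by
    have he : (fun y : ℝ => x₀ + r * y) = (fun z => x₀ + z) ∘ (fun y => r * y) := rfl
    rw [he, Set.image_comp, Set.image_mul_left_Ioo hr, Set.image_const_add_Ioo]
  have h2 : (fun y => r * y) '' Set.Ioo a b = Set.Ioo (r * a) (r * b) :=
    Set.image_mul_left_Ioo hr a b
  rw [h1, h2, Real.volume_Ioo, ENNReal.toReal_ofReal (by nlinarith)]
  congr 1
  ring

/-- For fixed `t`, the scaled difference quotient tends to `A * t`. -/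
lemma slope_aux (hd : HasDerivAt β A x₀) (t : ℝ) :
    Tendsto (fun r : ℝ => (β (x₀ + r * t) - β x₀) / r) (𝓝[>] (0:ℝ)) (𝓝 (A * t)) := by
  have hg : HasDerivAt (fun r : ℝ => x₀ + r * t) t 0 :=
    (hasDerivAt_mul_const t).const_add x₀
  have hd' : HasDerivAt β A (x₀ + 0 * t) := by simpa using hd
  have hc : HasDerivAt (fun r : ℝ => β (x₀ + r * t)) (A * t) 0 := hd'.comp 0 hg
  have h := hasDerivAt_iff_tendsto_slope.mp hc
  have h2 : Tendsto (slope (fun r : ℝ => β (x₀ + r * t)) 0) (𝓝[>] (0:ℝ)) (𝓝 (A * t)) :=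
    h.mono_left (nhdsWithin_mono _ (fun x hx => ne_of_gt hx))
  refine h2.congr fun r => ?_
  simp [slope_def_field]

/-- ε-squeeze helper. -/
lemma eps_squeeze {l : Filter ℝ} {f lo hi : ℝ → ℝ} {A L U ε : ℝ}
    (hlo : Tendsto lo l (𝓝 L)) (hhi : Tendsto hi l (𝓝 U))
    (hle : ∀ᶠ r in l, lo r ≤ f r ∧ f r ≤ hi r)
    (hL : A - ε / 2 ≤ L) (hU : U ≤ A + ε / 2) (hε : 0 < ε) :
    ∀ᶠ r in l, |f r - A| < ε := by
  have h1 := Metric.tendsto_nhds.1 hlo (ε / 2) (by linarith)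
  have h2 := Metric.tendsto_nhds.1 hhi (ε / 2) (by linarith)
  filter_upwards [h1, h2, hle] with r hr1 hr2 ⟨hlof, hfhi⟩
  rw [Real.dist_eq, abs_lt] at hr1 hr2
  rw [abs_lt]
  constructor <;> nlinarith

end StieltjesStrongDeriv

open StieltjesStrongDeriv

set_option maxHeartbeats 1000000 in
/-- For a nondecreasing left-continuous `β` with Lebesgue–Stieltjes measure `μ_β`
(determined by `μ_β([a,b)) = β(b) − β(a)`), differentiability `β'(x₀) = A` is
equivalent to the strong derivative of `μ_β` at `x₀` existing and equalling `A`. -/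
theorem stieltjes_deriv_iff_strong_deriv
    (β : ℝ → ℝ) (hmono : Monotone β)
    (hlc : ∀ x : ℝ, ContinuousWithinAt β (Set.Iio x) x)
    (μβ : Measure ℝ)
    (hμβ : ∀ a b : ℝ, a ≤ b → μβ (Set.Ico a b) = ENNReal.ofReal (β b - β a))
    (x₀ A : ℝ) :
    HasDerivAt β A x₀ ↔ HasStrongDerivR μβ A x₀ := by
  constructor
  · -- forward direction
    intro hd
    -- A ≥ 0 since β is monotone
    have hA : 0 ≤ A := by
      have h := (StieltjesStrongDeriv.slope_aux hd 1)
      have hnn : ∀ᶠ r in 𝓝[>] (0:ℝ), 0 ≤ (β (x₀ + r * 1) - β x₀) / r := by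
        filter_upwards [self_mem_nhdsWithin] with r hr
        exact div_nonneg (sub_nonneg.2 (hmono (by simp [le_of_lt (show (0:ℝ) < r from hr)]))) hr.le
      have := ge_of_tendsto h hnn
      linarith [this]
    intro a b hab
    rw [Metric.tendsto_nhds]
    intro ε hε
    -- choose a' slightly to the right of a
    set δ : ℝ := min ((b - a) / 2) (ε * (b - a) / (4 * (A + 1))) with hδdef
    have hba : (0:ℝ) < b - a := by linarith
    have hδpos : 0 < δ := by
      refine lt_min (by linarith) (div_pos (mul_pos hε hba) (by linarith))
    set a' : ℝ := a + δ with ha'def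
    have haa' : a < a' := ha'def ▸ lt_add_of_pos_right a hδpos
    have ha'b : a' ≤ b := by
      have : δ ≤ (b - a) / 2 := min_le_left _ _
      simp only [ha'def]; linarith
    -- limits of the bounding difference quotients
    have hg : Tendsto (fun r : ℝ =>
        ((β (x₀ + r * b) - β x₀) / r - (β (x₀ + r * a) - β x₀) / r) / (b - a))
        (𝓝[>] (0:ℝ)) (𝓝 ((A * b - A * a) / (b - a))) :=
      ((StieltjesStrongDeriv.slope_aux hd b).sub (StieltjesStrongDeriv.slope_aux hd a)).div_const _
    have hg' : Tendsto (fun r : ℝ =>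
        ((β (x₀ + r * b) - β x₀) / r - (β (x₀ + r * a') - β x₀) / r) / (b - a))
        (𝓝[>] (0:ℝ)) (𝓝 ((A * b - A * a') / (b - a))) :=
      ((StieltjesStrongDeriv.slope_aux hd b).sub (StieltjesStrongDeriv.slope_aux hd a')).div_const _
    have hUval : (A * b - A * a) / (b - a) = A := by
      field_simp
    have hLval : A - ε / 2 ≤ (A * b - A * a') / (b - a) := by
      have hδle : δ ≤ ε * (b - a) / (4 * (A + 1)) := min_le_right _ _
      have heq : (A * b - A * a') / (b - a) = A - A * δ / (b - a) := by
        rw [ha'def]; field_simp; ring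
      rw [heq]
      have h3 : A * δ / (b - a) ≤ ε / 4 := by
        rw [div_le_iff₀ hba]
        rw [le_div_iff₀ (by linarith : (0:ℝ) < 4 * (A + 1))] at hδle
        nlinarith [hδpos.le]
      linarith
    -- eventual squeeze
    have hle : ∀ᶠ r in 𝓝[>] (0:ℝ),
        ((β (x₀ + r * b) - β x₀) / r - (β (x₀ + r * a') - β x₀) / r) / (b - a) ≤
          (μβ ((fun y => x₀ + r * y) '' (Set.Ioo a b))).toReal /
            (volume ((fun y => r * y) '' (Set.Ioo a b))).toReal ∧
        (μβ ((fun y => x₀ + r * y) '' (Set.Ioo a b))).toReal /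
            (volume ((fun y => r * y) '' (Set.Ioo a b))).toReal ≤
          ((β (x₀ + r * b) - β x₀) / r - (β (x₀ + r * a) - β x₀) / r) / (b - a) := by
      filter_upwards [self_mem_nhdsWithin] with r hr
      have hr' : (0:ℝ) < r := hr
      rw [StieltjesStrongDeriv.ratio_eq μβ x₀ a b hab hr']
      have hba : 0 < b - a := sub_pos.2 hab
      have hrba : 0 < r * (b - a) := by positivity
      have hcd : x₀ + r * a ≤ x₀ + r * b := by nlinarith
      have hcc' : x₀ + r * a < x₀ + r * a' := by nlinarith
      have hc'd : x₀ + r * a' ≤ x₀ + r * b := by nlinarith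
      have hup : (μβ (Set.Ioo (x₀ + r * a) (x₀ + r * b))).toReal ≤
          β (x₀ + r * b) - β (x₀ + r * a) := StieltjesStrongDeriv.toReal_mu_Ioo_le hmono hμβ hcd
      have hlo : β (x₀ + r * b) - β (x₀ + r * a') ≤
          (μβ (Set.Ioo (x₀ + r * a) (x₀ + r * b))).toReal :=
        StieltjesStrongDeriv.le_toReal_mu_Ioo hμβ hcc' hc'd
      constructor
      · rw [div_le_div_iff₀ hba hrba]
        have : ((β (x₀ + r * b) - β x₀) / r - (β (x₀ + r * a') - β x₀) / r) =
            (β (x₀ + r * b) - β (x₀ + r * a')) / r := by field_simp; ring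
        rw [this]
        rw [div_mul_eq_mul_div, div_le_iff₀ hr']
        nlinarith [hlo]
      · rw [div_le_div_iff₀ hrba hba]
        have : ((β (x₀ + r * b) - β x₀) / r - (β (x₀ + r * a) - β x₀) / r) =
            (β (x₀ + r * b) - β (x₀ + r * a)) / r := by field_simp; ring
        rw [this]
        rw [div_mul_eq_mul_div, le_div_iff₀ hr']
        nlinarith [hup]
    have hsq := StieltjesStrongDeriv.eps_squeeze hg' hg hle hLval (by rw [hUval]; linarith) hε
    filter_upwards [hsq] with r hr
    rwa [Real.dist_eq]
  · -- backward direction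
    intro hs
    -- A ≥ 0
    have hA : 0 ≤ A := by
      have h := hs 0 1 zero_lt_one
      refine ge_of_tendsto h ?_
      filter_upwards with r
      positivity
    -- one-sided limits of the difference quotient, via squeeze
    -- right-hand side
    have hright : Tendsto (fun r : ℝ => (β (x₀ + r) - β x₀) / r) (𝓝[>] (0:ℝ)) (𝓝 A) := by
      rw [Metric.tendsto_nhds]
      intro ε hε
      set η : ℝ := min 1 (ε / (4 * (A + 1))) with hηdef
      have hηpos : 0 < η := by apply lt_min <;> positivity
      have hη1 : η ≤ 1 := min_le_left _ _
      have hηle : η ≤ ε / (4 * (A + 1)) := min_le_right _ _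
      have hAη : A * η ≤ ε / 4 := by
        rw [le_div_iff₀ (by linarith : (0:ℝ) < 4 * (A + 1))] at hηle
        nlinarith [hηpos.le]
      -- lower bound : interval (0,1)
      have h1 : Tendsto (fun r : ℝ => (μβ (Set.Ioo x₀ (x₀ + r))).toReal / r)
          (𝓝[>] (0:ℝ)) (𝓝 A) := by
        refine (hs 0 1 zero_lt_one).congr' ?_
        filter_upwards [self_mem_nhdsWithin] with r hr
        rw [StieltjesStrongDeriv.ratio_eq μβ x₀ 0 1 zero_lt_one hr]
        norm_num
      -- upper bound : interval (-η, 1), scaled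
      have h2 : Tendsto (fun r : ℝ => (μβ (Set.Ioo (x₀ + r * (-η)) (x₀ + r))).toReal / r)
          (𝓝[>] (0:ℝ)) (𝓝 (A * (1 + η))) := by
        have hb : (-η : ℝ) < 1 := by linarith
        have h0 := hs (-η) 1 hb
        have h0' : Tendsto (fun r : ℝ =>
            (μβ (Set.Ioo (x₀ + r * (-η)) (x₀ + r))).toReal / (r * (1 + η)))
            (𝓝[>] (0:ℝ)) (𝓝 A) := by
          refine h0.congr' ?_
          filter_upwards [self_mem_nhdsWithin] with r hr
          rw [StieltjesStrongDeriv.ratio_eq μβ x₀ (-η) 1 hb hr]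
          norm_num
        have h0'' := h0'.mul_const (1 + η)
        refine h0''.congr' ?_
        filter_upwards [self_mem_nhdsWithin] with r hr
        have hr' : (0:ℝ) < r := hr
        field_simp
      have hle : ∀ᶠ r in 𝓝[>] (0:ℝ),
          (μβ (Set.Ioo x₀ (x₀ + r))).toReal / r ≤ (β (x₀ + r) - β x₀) / r ∧
          (β (x₀ + r) - β x₀) / r ≤ (μβ (Set.Ioo (x₀ + r * (-η)) (x₀ + r))).toReal / r := by
        filter_upwards [self_mem_nhdsWithin] with r hr
        have hr' : (0:ℝ) < r := hr
        have hico : β (x₀ + r) - β x₀ = (μβ (Set.Ico x₀ (x₀ + r))).toReal := by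
          rw [hμβ x₀ (x₀ + r) (by linarith),
            ENNReal.toReal_ofReal (sub_nonneg.2 (hmono (by linarith)))]
        have hlow : (μβ (Set.Ioo x₀ (x₀ + r))).toReal ≤ (μβ (Set.Ico x₀ (x₀ + r))).toReal := by
          apply ENNReal.toReal_mono
          · rw [hμβ x₀ (x₀ + r) (by linarith)]; exact ENNReal.ofReal_ne_top
          · exact measure_mono Set.Ioo_subset_Ico_self
        have hx : x₀ + r * (-η) < x₀ := by nlinarith
        have hhigh : (μβ (Set.Ico x₀ (x₀ + r))).toReal ≤
            (μβ (Set.Ioo (x₀ + r * (-η)) (x₀ + r))).toReal := by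
          apply ENNReal.toReal_mono
          · exact StieltjesStrongDeriv.mu_Ioo_ne_top hμβ (by nlinarith)
          · exact measure_mono (Set.Ico_subset_Ioo_left hx)
        constructor
        · rw [hico]; exact div_le_div_of_nonneg_right hlow hr'.le
        · rw [hico]; exact div_le_div_of_nonneg_right hhigh hr'.le
      exact StieltjesStrongDeriv.eps_squeeze h1 h2 hle (by linarith)
        (by nlinarith) hε
    -- left-hand side
    have hleft : Tendsto (fun r : ℝ => (β x₀ - β (x₀ - r)) / r) (𝓝[>] (0:ℝ)) (𝓝 A) := by
      rw [Metric.tendsto_nhds]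
      intro ε hε
      set η : ℝ := min 1 (ε / (4 * (A + 1))) with hηdef
      have hηpos : 0 < η := by apply lt_min <;> positivity
      have hη1 : η ≤ 1 := min_le_left _ _
      have hηle : η ≤ ε / (4 * (A + 1)) := min_le_right _ _
      have hAη : A * η ≤ ε / 4 := by
        rw [le_div_iff₀ (by linarith : (0:ℝ) < 4 * (A + 1))] at hηle
        nlinarith [hηpos.le]
      have h1 : Tendsto (fun r : ℝ => (μβ (Set.Ioo (x₀ - r) x₀)).toReal / r)
          (𝓝[>] (0:ℝ)) (𝓝 A) := by
        refine (hs (-1) 0 (by norm_num)).congr' ?_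
        filter_upwards [self_mem_nhdsWithin] with r hr
        rw [StieltjesStrongDeriv.ratio_eq μβ x₀ (-1) 0 (by norm_num) hr]
        norm_num
        ring_nf
      have h2 : Tendsto (fun r : ℝ => (μβ (Set.Ioo (x₀ + r * (-(1 + η))) x₀)).toReal / r)
          (𝓝[>] (0:ℝ)) (𝓝 (A * (1 + η))) := by
        have hb : (-(1 + η) : ℝ) < 0 := by linarith
        have h0 := hs (-(1 + η)) 0 hb
        have h0' : Tendsto (fun r : ℝ =>
            (μβ (Set.Ioo (x₀ + r * (-(1 + η))) x₀)).toReal / (r * (1 + η)))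
            (𝓝[>] (0:ℝ)) (𝓝 A) := by
          refine h0.congr' ?_
          filter_upwards [self_mem_nhdsWithin] with r hr
          rw [StieltjesStrongDeriv.ratio_eq μβ x₀ (-(1 + η)) 0 hb hr]
          norm_num
        have h0'' := h0'.mul_const (1 + η)
        refine h0''.congr' ?_
        filter_upwards [self_mem_nhdsWithin] with r hr
        have hr' : (0:ℝ) < r := hr
        field_simp
      have hle : ∀ᶠ r in 𝓝[>] (0:ℝ),
          (μβ (Set.Ioo (x₀ - r) x₀)).toReal / r ≤ (β x₀ - β (x₀ - r)) / r ∧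
          (β x₀ - β (x₀ - r)) / r ≤ (μβ (Set.Ioo (x₀ + r * (-(1 + η))) x₀)).toReal / r := by
        filter_upwards [self_mem_nhdsWithin] with r hr
        have hr' : (0:ℝ) < r := hr
        have hico : β x₀ - β (x₀ - r) = (μβ (Set.Ico (x₀ - r) x₀)).toReal := by
          rw [hμβ (x₀ - r) x₀ (by linarith),
            ENNReal.toReal_ofReal (sub_nonneg.2 (hmono (by linarith)))]
        have hlow : (μβ (Set.Ioo (x₀ - r) x₀)).toReal ≤ (μβ (Set.Ico (x₀ - r) x₀)).toReal := by
          apply ENNReal.toReal_mono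
          · rw [hμβ (x₀ - r) x₀ (by linarith)]; exact ENNReal.ofReal_ne_top
          · exact measure_mono Set.Ioo_subset_Ico_self
        have hx : x₀ + r * (-(1 + η)) < x₀ - r := by nlinarith
        have hhigh : (μβ (Set.Ico (x₀ - r) x₀)).toReal ≤
            (μβ (Set.Ioo (x₀ + r * (-(1 + η))) x₀)).toReal := by
          apply ENNReal.toReal_mono
          · exact StieltjesStrongDeriv.mu_Ioo_ne_top hμβ (by nlinarith)
          · exact measure_mono (Set.Ico_subset_Ioo_left hx)
        constructor
        · rw [hico]; exact div_le_div_of_nonneg_right hlow hr'.le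
        · rw [hico]; exact div_le_div_of_nonneg_right hhigh hr'.le
      exact StieltjesStrongDeriv.eps_squeeze h1 h2 hle (by linarith) (by nlinarith) hε
    -- combine into the derivative
    rw [hasDerivAt_iff_tendsto_slope]
    rw [← nhdsLT_sup_nhdsGT x₀, tendsto_sup]
    constructor
    · -- left
      have hmap : Tendsto (fun y : ℝ => x₀ - y) (𝓝[<] x₀) (𝓝[>] (0:ℝ)) := by
        apply tendsto_nhdsWithin_of_tendsto_nhds_of_eventually_within
        · have : Tendsto (fun y : ℝ => x₀ - y) (𝓝 x₀) (𝓝 (x₀ - x₀)) :=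
            (tendsto_const_nhds.sub tendsto_id)
          simpa using this.mono_left nhdsWithin_le_nhds
        · filter_upwards [self_mem_nhdsWithin] with y hy
          simp only [Set.mem_Iio] at hy
          simp [Set.mem_Ioi, sub_pos, hy]
      have hcomp := hleft.comp hmap
      refine hcomp.congr' ?_
      filter_upwards [self_mem_nhdsWithin] with y hy
      simp only [Set.mem_Iio] at hy
      simp only [Function.comp_apply, slope_def_field]
      rw [sub_sub_cancel]
      rw [div_eq_div_iff (by linarith) (by linarith)]
      ring
    · -- right
      have hmap : Tendsto (fun y : ℝ => y - x₀) (𝓝[>] x₀) (𝓝[>] (0:ℝ)) := by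
        apply tendsto_nhdsWithin_of_tendsto_nhds_of_eventually_within
        · have : Tendsto (fun y : ℝ => y - x₀) (𝓝 x₀) (𝓝 (x₀ - x₀)) :=
            (tendsto_id.sub tendsto_const_nhds)
          simpa using this.mono_left nhdsWithin_le_nhds
        · filter_upwards [self_mem_nhdsWithin] with y hy
          simp only [Set.mem_Ioi] at hy
          simp [Set.mem_Ioi, sub_pos, hy]
      have hcomp := hright.comp hmap
      refine hcomp.congr' ?_
      filter_upwards [self_mem_nhdsWithin] with y hy
      simp only [Set.mem_Ioi] at hy
      simp only [Function.comp_apply, slope_def_field]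
      rw [add_sub_cancel]
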